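/- Suppose u, θ : ℝ → ℝ are differentiable functions satisfying du/dt = 2 Q(u)^{1/2} cos θ and dθ/dt = −Q(u)^{1/2} sin θ · ∑_{j=1}^m a_j/(a_j u + 1), where Q(u) = ∏_{j=1}^m (a_j u + 1) and a_j u(t) + 1 > 0 for all j and t. Then the function t ↦ Q(u(t))^{1/2} sin θ(t) is constant. -/

import Mathlib

theorem stmt7 {m : ℕ} (a : Fin m → ℝ) (u θ : ℝ → ℝ)
    (hpos : ∀ (j : Fin m) (t : ℝ), 0 < a j * u t + 1)
    (hu : ∀ t, HasDerivAt u
      (2 * Real.sqrt (∏ j, (a j * u t + 1)) * Real.cos (θ t)) t)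
    (hθ : ∀ t, HasDerivAt θ
      (-(Real.sqrt (∏ j, (a j * u t + 1)) * Real.sin (θ t)
          * ∑ j, a j / (a j * u t + 1))) t) :
    ∀ t s : ℝ, Real.sqrt (∏ j, (a j * u t + 1)) * Real.sin (θ t)
      = Real.sqrt (∏ j, (a j * u s + 1)) * Real.sin (θ s) := by
  set Q : ℝ → ℝ := fun t => ∏ j, (a j * u t + 1) with hQ
  set f : ℝ → ℝ := fun t => Real.sqrt (Q t) * Real.sin (θ t) with hf
  have hQpos : ∀ t, 0 < Q t := fun t => Finset.prod_pos (fun j _ => hpos j t)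
  have hsq : ∀ t, Real.sqrt (Q t) ^ 2 = Q t := fun t => Real.sq_sqrt (hQpos t).le
  have key : ∀ t, HasDerivAt f 0 t := by
    intro t
    set S : ℝ := ∑ j, a j / (a j * u t + 1) with hS
    have hQ' : HasDerivAt Q
        (∑ j, (∏ k ∈ Finset.univ.erase j, (a k * u t + 1)) •
          (a j * (2 * Real.sqrt (Q t) * Real.cos (θ t)))) t := by
      apply HasDerivAt.fun_finsetProd
      intro j _
      exact ((hu t).const_mul (a j)).add_const 1
    have hsum : (∑ j, (∏ k ∈ Finset.univ.erase j, (a k * u t + 1)) •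
          (a j * (2 * Real.sqrt (Q t) * Real.cos (θ t))))
        = Q t * S * (2 * Real.sqrt (Q t) * Real.cos (θ t)) := by
      rw [hS, Finset.mul_sum, Finset.sum_mul]
      refine Finset.sum_congr rfl fun j _ => ?_
      have hne : a j * u t + 1 ≠ 0 := (hpos j t).ne'
      have hme : (a j * u t + 1) * (∏ k ∈ Finset.univ.erase j, (a k * u t + 1)) = Q t :=
        Finset.mul_prod_erase Finset.univ (fun k => a k * u t + 1) (Finset.mem_univ j)
      rw [smul_eq_mul, ← hme]
      have hc : a j / (a j * u t + 1) * (a j * u t + 1) = a j := div_mul_cancel₀ _ hne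
      linear_combination (-((∏ k ∈ Finset.univ.erase j, (a k * u t + 1)) * (2 * Real.sqrt ((a j * u t + 1) * ∏ k ∈ Finset.univ.erase j, (a k * u t + 1)) * Real.cos (θ t)))) * hc
    have hsqrt' : HasDerivAt (fun t => Real.sqrt (Q t))
        (Q t * S * Real.cos (θ t)) t := by
      have := (Real.hasDerivAt_sqrt (hQpos t).ne').comp t (hsum ▸ hQ')
      refine this.congr_deriv ?_
      have hs : Real.sqrt (Q t) ≠ 0 := (Real.sqrt_pos.mpr (hQpos t)).ne'
      field_simp
    have hsin' : HasDerivAt (fun t => Real.sin (θ t))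
        (Real.cos (θ t) * (-(Real.sqrt (Q t) * Real.sin (θ t) * S))) t :=
      (Real.hasDerivAt_sin (θ t)).comp t (hθ t)
    have := hsqrt'.mul hsin'
    refine this.congr_deriv ?_
    linear_combination (-(S * Real.cos (θ t) * Real.sin (θ t))) * (hsq t)
  have hd : Differentiable ℝ f := fun t => (key t).differentiableAt
  have hz : ∀ t, deriv f t = 0 := fun t => (key t).deriv
  intro t s
  exact is_const_of_deriv_eq_zero hd hz t s
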